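/- (General criterion for asymmetric relaxation.) Let ψ : E → ℝ be three times continuously differentiable and let η¹, η² : ℝ → E both satisfy Newton's law η̇(t) = −λ(η(t) − η_q) with the same λ > 0 and target η_q. Write Fᵢ(t) := F(ηⁱ(t)) and Qᵢ(t) := ⟪η̇ⁱ(t), H(ηⁱ(t)) η̇ⁱ(t)⟫. If at some time t* the Riemannian speeds agree, Q₁(t*) = Q₂(t*), then λ (F₂''(t*) − F₁''(t*)) = D³ψ(η¹(t*))[η̇¹(t*), η̇¹(t*), η̇¹(t*)] − D³ψ(η²(t*))[η̇²(t*), η̇²(t*), η̇²(t*)]; i.e., the difference of second time-derivatives of the Bregman divergences at a speed-matching time is governed by the Amari–Chentsov tensor −D³ψ evaluated on the two velocities. -/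

import Mathlib

open scoped RealInnerProductSpace

/-- Third iterated Fréchet derivative as a triple `fderiv`. -/
lemma iFD3_eq {n : ℕ} (ψ : EuclideanSpace ℝ (Fin n) → ℝ) (x a b c : EuclideanSpace ℝ (Fin n)) :
    iteratedFDeriv ℝ 3 ψ x ![a, b, c] =
      fderiv ℝ (fderiv ℝ (fderiv ℝ ψ)) x a b c := by
  have h := iteratedFDeriv_succ_apply_right (𝕜 := ℝ) (f := ψ) (x := x) (n := 2) ![a, b, c]
  rw [h, iteratedFDeriv_two_apply]
  norm_num [Fin.init, Fin.last]

/-- Pairing with the Hessian (as derivative of the gradient) is the second Fréchet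
derivative. -/
lemma inner_hess {n : ℕ} (ψ : EuclideanSpace ℝ (Fin n) → ℝ) (x u v : EuclideanSpace ℝ (Fin n)) :
    ⟪u, fderiv ℝ (gradient ψ) x v⟫ = fderiv ℝ (fderiv ℝ ψ) x v u := by
  have hg : gradient ψ = (InnerProductSpace.toDual ℝ (EuclideanSpace ℝ (Fin n))).symm ∘
      fderiv ℝ ψ := rfl
  rw [hg, LinearIsometryEquiv.comp_fderiv]
  simp only [ContinuousLinearMap.coe_comp', Function.comp_apply,
    LinearIsometryEquiv.coe_coe, LinearIsometryEquiv.coe_toContinuousLinearEquiv]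
  rw [real_inner_comm]
  exact InnerProductSpace.toDual_symm_apply

/-- Pairing with the gradient is the first Fréchet derivative. -/
lemma inner_grad {n : ℕ} (ψ : EuclideanSpace ℝ (Fin n) → ℝ) (x u : EuclideanSpace ℝ (Fin n)) :
    ⟪gradient ψ x, u⟫ = fderiv ℝ ψ x u := by
  rw [show gradient ψ x = (InnerProductSpace.toDual ℝ (EuclideanSpace ℝ (Fin n))).symm
      (fderiv ℝ ψ x) from rfl, InnerProductSpace.toDual_symm_apply]

/-- The second time-derivative of the Bregman divergence along a Newtonian relaxation. -/
lemma newton_second_deriv {n : ℕ} {ψ : EuclideanSpace ℝ (Fin n) → ℝ} (hψ : ContDiff ℝ 3 ψ)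
    (ηq : EuclideanSpace ℝ (Fin n)) {lam : ℝ} (hlam : lam ≠ 0)
    {η : ℝ → EuclideanSpace ℝ (Fin n)} (hη : Differentiable ℝ η)
    (hnewton : ∀ t, deriv η t = (-lam) • (η t - ηq)) (t : ℝ) :
    deriv (deriv (fun s => ψ ηq - ψ (η s) - (fderiv ℝ ψ (η s)) (ηq - η s))) t =
      -(lam⁻¹ * fderiv ℝ (fderiv ℝ (fderiv ℝ ψ)) (η t) (deriv η t) (deriv η t) (deriv η t))
        + 2 * fderiv ℝ (fderiv ℝ ψ) (η t) (deriv η t) (deriv η t) := by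
  have hg : ContDiff ℝ 2 (fderiv ℝ ψ) := hψ.fderiv_right (by norm_num)
  have hB : ContDiff ℝ 1 (fderiv ℝ (fderiv ℝ ψ)) := hg.fderiv_right (by norm_num)
  -- first derivative as a function
  have h1 : deriv (fun s => ψ ηq - ψ (η s) - (fderiv ℝ ψ (η s)) (ηq - η s)) =
      fun s => -(fderiv ℝ (fderiv ℝ ψ) (η s) (deriv η s) (ηq - η s)) := by
    funext s
    have hηs : HasDerivAt η (deriv η s) s := (hη s).hasDerivAt
    have dψ : HasDerivAt (fun u => ψ (η u)) (fderiv ℝ ψ (η s) (deriv η s)) s :=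
      ((hψ.differentiable (by norm_num) (η s)).hasFDerivAt).comp_hasDerivAt s hηs
    have dg : HasDerivAt (fun u => fderiv ℝ ψ (η u))
        (fderiv ℝ (fderiv ℝ ψ) (η s) (deriv η s)) s :=
      ((hg.differentiable (by norm_num) (η s)).hasFDerivAt).comp_hasDerivAt s hηs
    have dw : HasDerivAt (fun u => ηq - η u) (-(deriv η s)) s := hηs.const_sub ηq
    have dinner : HasDerivAt (fun u => fderiv ℝ ψ (η u) (ηq - η u))
        (fderiv ℝ (fderiv ℝ ψ) (η s) (deriv η s) (ηq - η s)
          + fderiv ℝ ψ (η s) (-(deriv η s))) s := dg.clm_apply dw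
    have dF : HasDerivAt (fun u => ψ ηq - ψ (η u) - (fderiv ℝ ψ (η u)) (ηq - η u))
        ((-(fderiv ℝ ψ (η s) (deriv η s))) -
          (fderiv ℝ (fderiv ℝ ψ) (η s) (deriv η s) (ηq - η s)
            + fderiv ℝ ψ (η s) (-(deriv η s)))) s := (dψ.const_sub (ψ ηq)).sub dinner
    rw [dF.deriv]
    simp [map_neg]
  rw [h1]
  -- second derivative
  have hηt : HasDerivAt η (deriv η t) t := (hη t).hasDerivAt
  have hderivη : (fun s => deriv η s) = fun s => (-lam) • (η s - ηq) := funext hnewton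
  have dv : HasDerivAt (fun s => deriv η s) ((-lam) • deriv η t) t := by
    rw [hderivη]; exact (hηt.sub_const ηq).const_smul (-lam)
  have dB : HasDerivAt (fun s => fderiv ℝ (fderiv ℝ ψ) (η s))
      (fderiv ℝ (fderiv ℝ (fderiv ℝ ψ)) (η t) (deriv η t)) t :=
    ((hB.differentiable (by norm_num) (η t)).hasFDerivAt).comp_hasDerivAt t hηt
  have dBv : HasDerivAt (fun s => fderiv ℝ (fderiv ℝ ψ) (η s) (deriv η s))
      (fderiv ℝ (fderiv ℝ (fderiv ℝ ψ)) (η t) (deriv η t) (deriv η t)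
        + fderiv ℝ (fderiv ℝ ψ) (η t) ((-lam) • deriv η t)) t := dB.clm_apply dv
  have dw : HasDerivAt (fun s => ηq - η s) (-(deriv η t)) t := hηt.const_sub ηq
  have dG : HasDerivAt (fun s => fderiv ℝ (fderiv ℝ ψ) (η s) (deriv η s) (ηq - η s))
      ((fderiv ℝ (fderiv ℝ (fderiv ℝ ψ)) (η t) (deriv η t) (deriv η t)
        + fderiv ℝ (fderiv ℝ ψ) (η t) ((-lam) • deriv η t)) (ηq - η t)
        + fderiv ℝ (fderiv ℝ ψ) (η t) (deriv η t) (-(deriv η t))) t := dBv.clm_apply dw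
  rw [HasDerivAt.deriv (f := fun s => -(fderiv ℝ (fderiv ℝ ψ) (η s) (deriv η s) (ηq - η s))) dG.neg]
  -- now algebra: use ηq - η t = lam⁻¹ • deriv η t
  have hw : ηq - η t = lam⁻¹ • deriv η t := by
    rw [hnewton t, smul_smul]
    rw [show lam⁻¹ * -lam = -1 by field_simp]
    simp
  rw [hw]
  simp only [ContinuousLinearMap.add_apply, map_smul, map_neg, smul_eq_mul,
    ContinuousLinearMap.neg_apply, ContinuousLinearMap.smul_apply]
  field_simp
  ring

/-- **General criterion for asymmetric relaxation.** For two Newtonian relaxations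
`η¹, η²` toward the same target with the same rate, at any time `t*` where the
Riemannian speeds agree, the difference of the second time-derivatives of the Bregman
divergences is governed by the Amari–Chentsov tensor `−D³ψ` evaluated on the two
velocities. -/
theorem asymmetric_relaxation_criterion
    (n : ℕ) (ψ : EuclideanSpace ℝ (Fin n) → ℝ) (hψ : ContDiff ℝ 3 ψ)
    (ηq : EuclideanSpace ℝ (Fin n)) (lam : ℝ) (hlam : 0 < lam)
    (H : EuclideanSpace ℝ (Fin n) →
      EuclideanSpace ℝ (Fin n) →L[ℝ] EuclideanSpace ℝ (Fin n))
    (hH : ∀ η, H η = fderiv ℝ (gradient ψ) η)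
    (F : EuclideanSpace ℝ (Fin n) → ℝ)
    (hF : ∀ η, F η = ψ ηq - ψ η - ⟪gradient ψ η, ηq - η⟫)
    (η₁ η₂ : ℝ → EuclideanSpace ℝ (Fin n))
    (hη₁ : Differentiable ℝ η₁) (hη₂ : Differentiable ℝ η₂)
    (hnewton₁ : ∀ t, deriv η₁ t = (-lam) • (η₁ t - ηq))
    (hnewton₂ : ∀ t, deriv η₂ t = (-lam) • (η₂ t - ηq))
    (Q₁ Q₂ : ℝ → ℝ)
    (hQ₁ : ∀ t, Q₁ t = ⟪deriv η₁ t, H (η₁ t) (deriv η₁ t)⟫)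
    (hQ₂ : ∀ t, Q₂ t = ⟪deriv η₂ t, H (η₂ t) (deriv η₂ t)⟫)
    (tstar : ℝ) (hspeed : Q₁ tstar = Q₂ tstar) :
    lam * (deriv (deriv (fun t => F (η₂ t))) tstar -
        deriv (deriv (fun t => F (η₁ t))) tstar) =
      iteratedFDeriv ℝ 3 ψ (η₁ tstar) ![deriv η₁ tstar, deriv η₁ tstar, deriv η₁ tstar] -
      iteratedFDeriv ℝ 3 ψ (η₂ tstar) ![deriv η₂ tstar, deriv η₂ tstar, deriv η₂ tstar] := by
  have hlam' : lam ≠ 0 := ne_of_gt hlam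
  have hFeq : ∀ η : ℝ → EuclideanSpace ℝ (Fin n), (fun t => F (η t)) =
      fun t => ψ ηq - ψ (η t) - (fderiv ℝ ψ (η t)) (ηq - η t) := by
    intro η; funext t; rw [hF, inner_grad]
  have h1 := newton_second_deriv hψ ηq hlam' hη₁ hnewton₁ tstar
  have h2 := newton_second_deriv hψ ηq hlam' hη₂ hnewton₂ tstar
  rw [hFeq η₁, hFeq η₂, h1, h2, iFD3_eq, iFD3_eq]
  have hs : fderiv ℝ (fderiv ℝ ψ) (η₁ tstar) (deriv η₁ tstar) (deriv η₁ tstar) =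
      fderiv ℝ (fderiv ℝ ψ) (η₂ tstar) (deriv η₂ tstar) (deriv η₂ tstar) := by
    have e1 := hQ₁ tstar
    have e2 := hQ₂ tstar
    rw [hH, inner_hess] at e1 e2
    rw [← e1, ← e2, hspeed]
  rw [hs]
  field_simp
  ring
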